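/- (Proposition 1: 𝕊_E ⊆ 𝕊_B) For every stopping set T of H_E, the set {(j,e) ∈ Fin n × Fin b : (j, u_e) ∈ T} is a stopping set of H_B. In other words, every stopping set of the extended binary image (restricted to the transmitted coordinates and identified with coordinates of the basic binary image) is a stopping set of the basic binary image. -/
import Mathlib


open Matrix

/-- For a matrix `H` over `ZMod 2`, a stopping set is a set `S` of column indices such
that no row of `H` has exactly one nonzero entry in the columns belonging to `S`. -/
def IsStoppingSet {ρ J : Type*} (H : Matrix ρ J (ZMod 2)) (S : Set J) : Prop :=
  ∀ r : ρ, ¬ ∃! j : J, j ∈ S ∧ H r j ≠ 0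

/-- **Proposition 1: 𝕊_E ⊆ 𝕊_B.** For every stopping set `T` of `H_E`,
the set `{(j, e) : (j, u_e) ∈ T}` is a stopping set of `H_B`: every stopping set of the
extended binary image, restricted to the transmitted coordinates and identified with
coordinates of the basic binary image, is a stopping set of the basic binary image. -/
theorem stopping_set_of_extended_is_stopping_set_of_basic (b m n : ℕ) (hb : 1 ≤ b)
    (ΦB : GaloisField 2 b ≃ₗ[ZMod 2] (Fin b → ZMod 2))
    (Ψm : GaloisField 2 b → Matrix (Fin b) (Fin b) (ZMod 2))
    (hΨm : ∀ (h x : GaloisField 2 b), Ψm h *ᵥ ΦB x = ΦB (h * x))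
    (Hq : Matrix (Fin m) (Fin n) (GaloisField 2 b))
    (HB : Matrix (Fin m × Fin b) (Fin n × Fin b) (ZMod 2))
    (hHB : ∀ (i : Fin m) (e : Fin b) (j : Fin n) (f : Fin b),
      HB (i, e) (j, f) = Ψm (Hq i j) e f)
    (HE : Matrix
      ((Fin m × {v : Fin b → ZMod 2 // v ≠ 0}) ⊕
        (Fin n × {v : Fin b → ZMod 2 // v ≠ 0} × {v : Fin b → ZMod 2 // v ≠ 0}))
      (Fin n × {v : Fin b → ZMod 2 // v ≠ 0}) (ZMod 2))
    (hHPM : ∀ (i : Fin m) (c : {v : Fin b → ZMod 2 // v ≠ 0}) (j : Fin n)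
        (c' : {v : Fin b → ZMod 2 // v ≠ 0}),
      HE (Sum.inl (i, c)) (j, c') = 1 ↔
        (Hq i j ≠ 0 ∧
          (c' : Fin b → ZMod 2) = (Ψm (Hq i j))ᵀ *ᵥ (c : Fin b → ZMod 2)))
    (hHS : ∀ (j₀ : Fin n) (c₁ c₂ : {v : Fin b → ZMod 2 // v ≠ 0}) (j : Fin n)
        (c' : {v : Fin b → ZMod 2 // v ≠ 0}),
      HE (Sum.inr (j₀, c₁, c₂)) (j, c') = 1 ↔
        (j = j₀ ∧ c₁ ≠ c₂ ∧ (c₁ : Fin b → ZMod 2) + (c₂ : Fin b → ZMod 2) ≠ 0 ∧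
          (c' = c₁ ∨ c' = c₂ ∨
            (c' : Fin b → ZMod 2) = (c₁ : Fin b → ZMod 2) + (c₂ : Fin b → ZMod 2))))
    (u : Fin b → {v : Fin b → ZMod 2 // v ≠ 0})
    (hu : ∀ e : Fin b, (u e : Fin b → ZMod 2) = Pi.single e 1)
    (T : Set (Fin n × {v : Fin b → ZMod 2 // v ≠ 0}))
    (hT : IsStoppingSet HE T) :
    IsStoppingSet HB {q : Fin n × Fin b | (q.1, u q.2) ∈ T} := by
  classical
  intro r
  obtain ⟨i, e⟩ := r
  rintro ⟨⟨j0, f0⟩, ⟨hmem0, hne0⟩, huniq⟩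
  simp only [Set.mem_setOf_eq] at hmem0
  have two : ∀ x : ZMod 2, x ≠ 0 → x = 1 := by decide
  have one0 : (1 : ZMod 2) ≠ 0 := by decide
  have addself : ∀ v : Fin b → ZMod 2, v + v = 0 := by
    intro v; funext g
    have h2 : ∀ a : ZMod 2, a + a = 0 := by decide
    simp [h2]
  set P : Fin n → (Fin b → ZMod 2) → Prop :=
    fun j v => ∀ h : v ≠ 0, (j, ⟨v, h⟩) ∉ T with hPdef
  -- Lemma L from simplex rows
  have hL : ∀ (j : Fin n) (c₁ c₂ : {v : Fin b → ZMod 2 // v ≠ 0}),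
      c₁ ≠ c₂ → (j, c₁) ∈ T → (j, c₂) ∉ T →
      ∀ h : (c₁ : Fin b → ZMod 2) + (c₂ : Fin b → ZMod 2) ≠ 0,
        (j, (⟨(c₁ : Fin b → ZMod 2) + (c₂ : Fin b → ZMod 2), h⟩ :
          {v : Fin b → ZMod 2 // v ≠ 0})) ∈ T := by
    intro j c₁ c₂ hne h1 h2 h3
    by_contra hcon
    apply hT (Sum.inr (j, c₁, c₂))
    refine ⟨(j, c₁), ⟨h1, ?_⟩, ?_⟩
    · rw [(hHS j c₁ c₂ j c₁).mpr ⟨rfl, hne, h3, Or.inl rfl⟩]; exact one0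
    · rintro ⟨j', c'⟩ ⟨hmem, hne'⟩
      obtain ⟨hj', -, -, hc'⟩ := (hHS j c₁ c₂ j' c').mp (two _ hne')
      subst hj'
      rcases hc' with h | h | h
      · rw [h]
      · exact absurd hmem (h ▸ h2)
      · exact absurd hmem (by
          have heq : c' = (⟨(c₁ : Fin b → ZMod 2) + (c₂ : Fin b → ZMod 2), h3⟩ :
              {v : Fin b → ZMod 2 // v ≠ 0}) := Subtype.ext h
          rw [heq]; exact hcon)
  -- P is closed under addition
  have hPadd : ∀ (j : Fin n) (v₁ v₂ : Fin b → ZMod 2),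
      P j v₁ → P j v₂ → P j (v₁ + v₂) := by
    intro j v₁ v₂ h1 h2 h hTmem
    by_cases hv1 : v₁ = 0
    · subst hv1
      rw [zero_add] at h
      exact h2 h (by convert hTmem using 3; rw [zero_add])
    by_cases hv2 : v₂ = 0
    · subst hv2
      rw [add_zero] at h
      exact h1 h (by convert hTmem using 3; rw [add_zero])
    by_cases hvv : v₁ = v₂
    · subst hvv; exact h (addself v₁)
    · have hne : (⟨v₁ + v₂, h⟩ : {v : Fin b → ZMod 2 // v ≠ 0}) ≠ ⟨v₁, hv1⟩ := by
        intro hcontra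
        have hval : v₁ + v₂ = v₁ := congrArg Subtype.val hcontra
        exact hv2 (by rwa [add_eq_left] at hval)
      have hval : v₁ + v₂ + v₁ = v₂ := by
        rw [add_comm v₁ v₂, add_assoc, addself, add_zero]
      have hsum : v₁ + v₂ + v₁ ≠ 0 := by rw [hval]; exact hv2
      have hmem2 := hL j ⟨v₁ + v₂, h⟩ ⟨v₁, hv1⟩ hne hTmem (h1 hv1) hsum
      apply h2 hv2
      have heq : (⟨v₁ + v₂ + v₁, hsum⟩ : {v : Fin b → ZMod 2 // v ≠ 0}) = ⟨v₂, hv2⟩ :=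
        Subtype.ext hval
      rwa [heq] at hmem2
  -- P contains any vector supported on coordinates f with P j (single f 1)
  have hPsum : ∀ (j : Fin n) (v : Fin b → ZMod 2),
      (∀ f, v f ≠ 0 → P j (Pi.single f 1)) → P j v := by
    intro j v hv
    have h0 : P j (0 : Fin b → ZMod 2) := fun h => absurd rfl h
    have key : ∀ s : Finset (Fin b), P j (∑ f ∈ s, Pi.single f (v f)) := by
      intro s
      induction s using Finset.induction with
      | empty => simpa using h0
      | @insert a s hx ih =>
        rw [Finset.sum_insert hx]
        refine hPadd _ _ _ ?_ ih
        by_cases hvf : v a = 0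
        · rw [hvf]; simpa using h0
        · rw [two _ hvf]; exact hv a hvf
    have hres := key Finset.univ
    rwa [Finset.univ_sum_single] at hres
  -- coordinates of (Ψm A)ᵀ *ᵥ u_e
  have hcoord : ∀ (j : Fin n) (f : Fin b),
      ((Ψm (Hq i j))ᵀ *ᵥ (u e : Fin b → ZMod 2)) f = HB (i, e) (j, f) := by
    intro j f
    rw [hHB, hu]
    simp [Matrix.mulVec, dotProduct, Matrix.transpose_apply, Pi.single_apply,
      Finset.sum_ite_eq]
  have hΨ0 : ∀ e' f : Fin b, Ψm 0 e' f = 0 := by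
    intro e' f
    have h1 := hΨm 0 (ΦB.symm (Pi.single f 1))
    rw [zero_mul, map_zero, LinearEquiv.apply_symm_apply] at h1
    have h2 := congrFun h1 e'
    simpa [Matrix.mulVec, dotProduct, Pi.single_apply, Finset.sum_ite_eq] using h2
  have hHq0 : Hq i j0 ≠ 0 := by
    intro hq
    apply hne0
    rw [hHB, hq, hΨ0]
  -- for j ≠ j0 : P j (cvec j)
  have hPj : ∀ j : Fin n, j ≠ j0 →
      P j ((Ψm (Hq i j))ᵀ *ᵥ (u e : Fin b → ZMod 2)) := by
    intro j hj
    apply hPsum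
    intro f hf
    rw [hcoord] at hf
    intro h hTm
    have hTm' : (j, u f) ∈ T := by
      have heq : (⟨Pi.single f 1, h⟩ : {v : Fin b → ZMod 2 // v ≠ 0}) = u f :=
        Subtype.ext (hu f).symm
      rwa [heq] at hTm
    have := huniq (j, f) ⟨hTm', hf⟩
    exact hj (congrArg Prod.fst this)
  -- cvec j0 is nonzero
  have hcne : ((Ψm (Hq i j0))ᵀ *ᵥ (u e : Fin b → ZMod 2)) ≠ 0 := by
    intro hc
    apply hne0
    rw [← hcoord j0 f0, hc]
    rfl
  have hcf0 : ((Ψm (Hq i j0))ᵀ *ᵥ (u e : Fin b → ZMod 2)) f0 = 1 :=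
    two _ (by rw [hcoord]; exact hne0)
  -- (j0, cvec j0) ∈ T
  have hj0mem : (j0, (⟨(Ψm (Hq i j0))ᵀ *ᵥ (u e : Fin b → ZMod 2), hcne⟩ :
      {v : Fin b → ZMod 2 // v ≠ 0})) ∈ T := by
    by_contra hnot
    have hPc : P j0 ((Ψm (Hq i j0))ᵀ *ᵥ (u e : Fin b → ZMod 2)) := fun h => hnot
    have hPw : P j0 ((Ψm (Hq i j0))ᵀ *ᵥ (u e : Fin b → ZMod 2) + Pi.single f0 1) := by
      apply hPsum
      intro f hf
      have hff0 : f ≠ f0 := by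
        intro hEq; subst hEq
        apply hf
        rw [Pi.add_apply, hcf0, Pi.single_eq_same]
        decide
      have hwf : ((Ψm (Hq i j0))ᵀ *ᵥ (u e : Fin b → ZMod 2)) f ≠ 0 := by
        intro h0'
        apply hf
        simp [Pi.single_apply, hff0, h0']
      rw [hcoord] at hwf
      intro h hTm
      have hTm' : (j0, u f) ∈ T := by
        have heq : (⟨Pi.single f 1, h⟩ : {v : Fin b → ZMod 2 // v ≠ 0}) = u f :=
          Subtype.ext (hu f).symm
        rwa [heq] at hTm
      have := huniq (j0, f) ⟨hTm', hwf⟩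
      exact hff0 (congrArg Prod.snd this)
    have hPall := hPadd j0 _ _ hPc hPw
    have hkey : (Ψm (Hq i j0))ᵀ *ᵥ (u e : Fin b → ZMod 2)
        + ((Ψm (Hq i j0))ᵀ *ᵥ (u e : Fin b → ZMod 2) + Pi.single f0 1)
        = Pi.single f0 1 := by
      rw [← add_assoc, addself, zero_add]
    rw [hkey] at hPall
    have hs0 : (Pi.single f0 1 : Fin b → ZMod 2) ≠ 0 := by
      intro h0'
      have := congrFun h0' f0
      simp at this
    apply hPall hs0
    have heq : (⟨Pi.single f0 1, hs0⟩ : {v : Fin b → ZMod 2 // v ≠ 0}) = u f0 :=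
      Subtype.ext (hu f0).symm
    rw [heq]; exact hmem0
  -- build the contradicting ∃! for the PM row (i, u e)
  apply hT (Sum.inl (i, u e))
  refine ⟨(j0, ⟨(Ψm (Hq i j0))ᵀ *ᵥ (u e : Fin b → ZMod 2), hcne⟩), ⟨hj0mem, ?_⟩, ?_⟩
  · rw [(hHPM i (u e) j0 _).mpr ⟨hHq0, rfl⟩]; exact one0
  · rintro ⟨j, c'⟩ ⟨hmem, hne'⟩
    obtain ⟨-, hc'⟩ := (hHPM i (u e) j c').mp (two _ hne')
    by_cases hj : j = j0
    · subst hj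
      have heq : c' = ⟨(Ψm (Hq i j))ᵀ *ᵥ (u e : Fin b → ZMod 2), hcne⟩ := Subtype.ext hc'
      rw [heq]
    · exfalso
      have hcv : ((Ψm (Hq i j))ᵀ *ᵥ (u e : Fin b → ZMod 2)) ≠ 0 := by
        rw [← hc']; exact c'.2
      apply hPj j hj hcv
      have heq : (⟨(Ψm (Hq i j))ᵀ *ᵥ (u e : Fin b → ZMod 2), hcv⟩ :
          {v : Fin b → ZMod 2 // v ≠ 0}) = c' := Subtype.ext hc'.symm
      rw [heq]; exact hmem
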